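/- Let n, r be natural numbers with r ≥ 1 and n ≥ 2r. Let A_{i,j}, for 1 ≤ i < j ≤ r, be 2×2 real matrices each of whose second row is zero, and let C be a 2r×(n−2r) real matrix such that every even-indexed row of C is zero (C_{2i,j} = 0 for i = 1,…,r and all j). Then the antisymmetric n×n matrix given in block form by [[J̄_{2r} + R(A_{i,j}), C], [−Cᵀ, 0]] has rank exactly 2r. -/

import Mathlib

open Matrix

/-- The 2×2 matrix `J = [[0,1],[-1,0]]`. -/
def Jmat : Matrix (Fin 2) (Fin 2) ℝ := !![0, 1; -1, 0]

/-- The `2r × 2r` block-diagonal matrix with `r` diagonal blocks equal to `J`. -/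
def Jbar (r : ℕ) : Matrix (Fin (2 * r)) (Fin (2 * r)) ℝ :=
  Matrix.of fun i j =>
    if (i : ℕ) / 2 = (j : ℕ) / 2 then
      Jmat ⟨(i : ℕ) % 2, by omega⟩ ⟨(j : ℕ) % 2, by omega⟩
    else 0

/-- Given 2×2 matrices `A i j` (used for `i < j`), the antisymmetric `2r × 2r` block matrix
whose `(i,j)`-th 2×2 block is `A i j` for `i < j`, `-(A j i)ᵀ` for `i > j`, and `0` for
`i = j`. -/
def Rblock {r : ℕ} (A : Fin r → Fin r → Matrix (Fin 2) (Fin 2) ℝ) :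
    Matrix (Fin (2 * r)) (Fin (2 * r)) ℝ :=
  Matrix.of fun x y =>
    if h : (x : ℕ) / 2 < (y : ℕ) / 2 then
      A ⟨(x : ℕ) / 2, by have := y.2; omega⟩ ⟨(y : ℕ) / 2, by have := y.2; omega⟩
        ⟨(x : ℕ) % 2, by omega⟩ ⟨(y : ℕ) % 2, by omega⟩
    else if h' : (y : ℕ) / 2 < (x : ℕ) / 2 then
      - A ⟨(y : ℕ) / 2, by have := x.2; omega⟩ ⟨(x : ℕ) / 2, by have := x.2; omega⟩
          ⟨(y : ℕ) % 2, by omega⟩ ⟨(x : ℕ) % 2, by omega⟩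
    else 0


/-- equiv separating even and odd indices of `Fin (2*r)`: `inl i ↦ 2i`, `inr i ↦ 2i+1`. -/
def eo (r : ℕ) : (Fin r) ⊕ (Fin r) ≃ Fin (2 * r) where
  toFun x := Sum.elim (fun i : Fin r => (⟨2 * i, by omega⟩ : Fin (2 * r)))
    (fun i : Fin r => (⟨2 * i + 1, by omega⟩ : Fin (2 * r))) x
  invFun x := if (x : ℕ) % 2 = 0 then Sum.inl ⟨(x : ℕ) / 2, by have := x.2; omega⟩
    else Sum.inr ⟨(x : ℕ) / 2, by have := x.2; omega⟩
  left_inv x := by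
    rcases x with i | i <;> simp only [Sum.elim_inl, Sum.elim_inr]
    · simp only [show (2 * (i : ℕ)) % 2 = 0 by omega, ↓reduceIte]
      exact congrArg _ (Fin.ext (by show 2 * (i : ℕ) / 2 = i; omega))
    · simp only [show ¬ (2 * (i : ℕ) + 1) % 2 = 0 by omega, ↓reduceIte]
      exact congrArg _ (Fin.ext (by show (2 * (i : ℕ) + 1) / 2 = i; omega))
  right_inv x := by
    simp only []
    by_cases h : (x : ℕ) % 2 = 0
    · rw [if_pos h]; exact Fin.ext (by show 2 * ((x : ℕ) / 2) = x; omega)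
    · rw [if_neg h]; exact Fin.ext (by show 2 * ((x : ℕ) / 2) + 1 = x; omega)

lemma eo_inl (r : ℕ) (i : Fin r) : ((eo r (Sum.inl i) : Fin (2 * r)) : ℕ) = 2 * i := rfl
lemma eo_inr (r : ℕ) (i : Fin r) : ((eo r (Sum.inr i) : Fin (2 * r)) : ℕ) = 2 * i + 1 := rfl

lemma eo_symm_even (r : ℕ) (x : Fin (2 * r)) (h : (x : ℕ) % 2 = 0) :
    (eo r).symm x = Sum.inl ⟨(x : ℕ) / 2, by have := x.2; omega⟩ := by
  show (if (x : ℕ) % 2 = 0 then _ else _) = _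
  rw [if_pos h]

section Entries
variable {r : ℕ} (A : Fin r → Fin r → Matrix (Fin 2) (Fin 2) ℝ)

/-- odd-odd entries vanish -/
lemma B_odd_odd (hA : ∀ i j : Fin r, i < j → ∀ y : Fin 2, A i j 1 y = 0) (i j : Fin r) :
    (Jbar r + Rblock A) (eo r (Sum.inr i)) (eo r (Sum.inr j)) = 0 := by
  have hx : ((eo r (Sum.inr i) : Fin (2*r)) : ℕ) = 2 * i + 1 := rfl
  have hy : ((eo r (Sum.inr j) : Fin (2*r)) : ℕ) = 2 * j + 1 := rfl
  rw [Matrix.add_apply]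
  rw [show (Jbar r) (eo r (Sum.inr i)) (eo r (Sum.inr j)) =
    if (2*(i:ℕ)+1) / 2 = (2*(j:ℕ)+1) / 2 then
      Jmat ⟨(2*(i:ℕ)+1) % 2, by omega⟩ ⟨(2*(j:ℕ)+1) % 2, by omega⟩ else 0 from rfl]
  rw [show Rblock A (eo r (Sum.inr i)) (eo r (Sum.inr j)) =
    if h : (2*(i:ℕ)+1) / 2 < (2*(j:ℕ)+1) / 2 then
      A ⟨(2*(i:ℕ)+1) / 2, by have := j.2; omega⟩ ⟨(2*(j:ℕ)+1) / 2, by have := j.2; omega⟩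
        ⟨(2*(i:ℕ)+1) % 2, by omega⟩ ⟨(2*(j:ℕ)+1) % 2, by omega⟩
    else if h' : (2*(j:ℕ)+1) / 2 < (2*(i:ℕ)+1) / 2 then
      - A ⟨(2*(j:ℕ)+1) / 2, by have := i.2; omega⟩ ⟨(2*(i:ℕ)+1) / 2, by have := i.2; omega⟩
          ⟨(2*(j:ℕ)+1) % 2, by omega⟩ ⟨(2*(i:ℕ)+1) % 2, by omega⟩
    else 0 from rfl]
  have hi2 : (2*(i:ℕ)+1) / 2 = i := by omega
  have hj2 : (2*(j:ℕ)+1) / 2 = j := by omega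
  have hi1 : (2*(i:ℕ)+1) % 2 = 1 := by omega
  have hj1 : (2*(j:ℕ)+1) % 2 = 1 := by omega
  simp only [hi2, hj2, hi1, hj1, Fin.mk_one, Fin.eta]
  rcases lt_trichotomy i j with h | h | h
  · rw [if_neg (fun hh => h.ne (Fin.ext hh)), dif_pos (by simpa using h), hA i j h]
    simp
  · subst h
    rw [if_pos rfl, dif_neg (by simp), dif_neg (by simp)]
    norm_num [Jmat]
  · rw [if_neg (fun hh => h.ne' (Fin.ext hh)), dif_neg (by simpa using not_lt.2 h.le),
      dif_pos (by simpa using h), hA j i h]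
    simp

lemma B_odd_even (hA : ∀ i j : Fin r, i < j → ∀ y : Fin 2, A i j 1 y = 0) (i j : Fin r)
    (hij : i ≤ j) :
    (Jbar r + Rblock A) (eo r (Sum.inr i)) (eo r (Sum.inl j)) = if i = j then -1 else 0 := by
  rw [Matrix.add_apply]
  rw [show (Jbar r) (eo r (Sum.inr i)) (eo r (Sum.inl j)) =
    if (2*(i:ℕ)+1) / 2 = (2*(j:ℕ)) / 2 then
      Jmat ⟨(2*(i:ℕ)+1) % 2, by omega⟩ ⟨(2*(j:ℕ)) % 2, by omega⟩ else 0 from rfl]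
  rw [show Rblock A (eo r (Sum.inr i)) (eo r (Sum.inl j)) =
    if h : (2*(i:ℕ)+1) / 2 < (2*(j:ℕ)) / 2 then
      A ⟨(2*(i:ℕ)+1) / 2, by have := j.2; omega⟩ ⟨(2*(j:ℕ)) / 2, by have := j.2; omega⟩
        ⟨(2*(i:ℕ)+1) % 2, by omega⟩ ⟨(2*(j:ℕ)) % 2, by omega⟩
    else if h' : (2*(j:ℕ)) / 2 < (2*(i:ℕ)+1) / 2 then
      - A ⟨(2*(j:ℕ)) / 2, by have := i.2; omega⟩ ⟨(2*(i:ℕ)+1) / 2, by have := i.2; omega⟩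
          ⟨(2*(j:ℕ)) % 2, by omega⟩ ⟨(2*(i:ℕ)+1) % 2, by omega⟩
    else 0 from rfl]
  have hi2 : (2*(i:ℕ)+1) / 2 = i := by omega
  have hj2 : (2*(j:ℕ)) / 2 = j := by omega
  have hi1 : (2*(i:ℕ)+1) % 2 = 1 := by omega
  have hj1 : (2*(j:ℕ)) % 2 = 0 := by omega
  simp only [hi2, hj2, hi1, hj1, Fin.mk_one, Fin.mk_zero, Fin.eta]
  rcases eq_or_lt_of_le hij with h | h
  · subst h
    rw [if_pos rfl, dif_neg (by simp), dif_neg (by simp), if_pos rfl]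
    norm_num [Jmat]
  · rw [if_neg (fun hh => h.ne (Fin.ext hh)), dif_pos (by simpa using h), hA i j h,
      if_neg h.ne]
    simp

lemma B_even_odd (hA : ∀ i j : Fin r, i < j → ∀ y : Fin 2, A i j 1 y = 0) (i j : Fin r)
    (hij : j ≤ i) :
    (Jbar r + Rblock A) (eo r (Sum.inl i)) (eo r (Sum.inr j)) = if i = j then 1 else 0 := by
  rw [Matrix.add_apply]
  rw [show (Jbar r) (eo r (Sum.inl i)) (eo r (Sum.inr j)) =
    if (2*(i:ℕ)) / 2 = (2*(j:ℕ)+1) / 2 then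
      Jmat ⟨(2*(i:ℕ)) % 2, by omega⟩ ⟨(2*(j:ℕ)+1) % 2, by omega⟩ else 0 from rfl]
  rw [show Rblock A (eo r (Sum.inl i)) (eo r (Sum.inr j)) =
    if h : (2*(i:ℕ)) / 2 < (2*(j:ℕ)+1) / 2 then
      A ⟨(2*(i:ℕ)) / 2, by have := j.2; omega⟩ ⟨(2*(j:ℕ)+1) / 2, by have := j.2; omega⟩
        ⟨(2*(i:ℕ)) % 2, by omega⟩ ⟨(2*(j:ℕ)+1) % 2, by omega⟩
    else if h' : (2*(j:ℕ)+1) / 2 < (2*(i:ℕ)) / 2 then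
      - A ⟨(2*(j:ℕ)+1) / 2, by have := i.2; omega⟩ ⟨(2*(i:ℕ)) / 2, by have := i.2; omega⟩
          ⟨(2*(j:ℕ)+1) % 2, by omega⟩ ⟨(2*(i:ℕ)) % 2, by omega⟩
    else 0 from rfl]
  have hi2 : (2*(i:ℕ)) / 2 = i := by omega
  have hj2 : (2*(j:ℕ)+1) / 2 = j := by omega
  have hi1 : (2*(i:ℕ)) % 2 = 0 := by omega
  have hj1 : (2*(j:ℕ)+1) % 2 = 1 := by omega
  simp only [hi2, hj2, hi1, hj1, Fin.mk_one, Fin.mk_zero, Fin.eta]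
  rcases eq_or_lt_of_le hij with h | h
  · subst h
    rw [if_pos rfl, dif_neg (by simp), dif_neg (by simp), if_pos rfl]
    norm_num [Jmat]
  · rw [if_neg (fun hh => h.ne' (Fin.ext hh)), dif_neg (by simpa using not_lt.2 h.le),
      dif_pos (by simpa using h), hA j i h, if_neg h.ne']
    simp
end Entries

/-- the main structural fact: `B = J̄ + R(A)` has a two-sided inverse whose
even-even entries vanish. -/
lemma B_has_good_inverse {r : ℕ} (A : Fin r → Fin r → Matrix (Fin 2) (Fin 2) ℝ)
    (hA : ∀ i j : Fin r, i < j → ∀ y : Fin 2, A i j 1 y = 0) :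
    ∃ V : Matrix (Fin (2 * r)) (Fin (2 * r)) ℝ,
      V * (Jbar r + Rblock A) = 1 ∧ (Jbar r + Rblock A) * V = 1 ∧
      ∀ x y : Fin (2 * r), (x : ℕ) % 2 = 0 → (y : ℕ) % 2 = 0 → V x y = 0 := by
  classical
  set B := Jbar r + Rblock A with hB
  set Be := B.submatrix (eo r) (eo r) with hBedef
  set S := Be.toBlocks₁₁ with hS
  set U := Be.toBlocks₁₂ with hU
  set T := Be.toBlocks₂₁ with hT
  have h22 : Be.toBlocks₂₂ = 0 := by
    ext i j
    simp only [Matrix.toBlocks₂₂, Matrix.of_apply, Matrix.zero_apply, Matrix.submatrix_apply]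
    exact B_odd_odd A hA i j
  have hBe : Be = fromBlocks S U T 0 := by
    rw [hS, hU, hT, ← h22, fromBlocks_toBlocks]
  -- triangularity
  have hUtri : U.BlockTriangular id := by
    intro i j h
    have h' : j < i := h
    have := B_even_odd A hA i j (le_of_lt h')
    rw [if_neg (ne_of_gt h')] at this
    exact this
  have hUdiag : ∀ i : Fin r, U i i = 1 := by
    intro i
    have := B_even_odd A hA i i le_rfl
    rw [if_pos rfl] at this
    exact this
  have hTtri : T.BlockTriangular OrderDual.toDual := by
    intro i j h
    have h' : i < j := h
    have := B_odd_even A hA i j (le_of_lt h')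
    rw [if_neg (ne_of_lt h')] at this
    exact this
  have hTdiag : ∀ i : Fin r, T i i = -1 := by
    intro i
    have := B_odd_even A hA i i le_rfl
    rw [if_pos rfl] at this
    exact this
  have hUdet : U.det = 1 := by
    rw [Matrix.det_of_upperTriangular hUtri]
    exact Finset.prod_eq_one fun i _ => hUdiag i
  have hTdet : T.det = (-1 : ℝ) ^ r := by
    rw [Matrix.det_of_lowerTriangular T hTtri]
    rw [Finset.prod_congr rfl fun i _ => hTdiag i]
    simp
  letI iU : Invertible U := U.invertibleOfIsUnitDet (by rw [hUdet]; exact isUnit_one)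
  letI iT : Invertible T := T.invertibleOfIsUnitDet (by rw [hTdet]; exact isUnit_one.neg.pow r)
  set V' : Matrix (Fin r ⊕ Fin r) (Fin r ⊕ Fin r) ℝ :=
    fromBlocks 0 (⅟T) (⅟U) (-(⅟U * S * ⅟T)) with hV'
  have hV'Be : V' * Be = 1 := by
    rw [hV', hBe, fromBlocks_multiply]
    rw [show (fromBlocks ((0 : Matrix (Fin r) (Fin r) ℝ) * S + ⅟T * T)
      ((0 : Matrix (Fin r) (Fin r) ℝ) * U + ⅟T * 0)
      (⅟U * S + -(⅟U * S * ⅟T) * T) (⅟U * U + -(⅟U * S * ⅟T) * 0)) =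
      fromBlocks 1 0 0 1 by
        congr 1 <;> simp [Matrix.mul_assoc, Matrix.invOf_mul_cancel_right]]
    exact fromBlocks_one
  have hBeV' : Be * V' = 1 := by
    rw [hV', hBe, fromBlocks_multiply]
    rw [show (fromBlocks (S * 0 + U * ⅟U) (S * ⅟T + U * -(⅟U * S * ⅟T))
      (T * (0 : Matrix (Fin r) (Fin r) ℝ) + (0 : Matrix (Fin r) (Fin r) ℝ) * ⅟U)
      (T * ⅟T + (0 : Matrix (Fin r) (Fin r) ℝ) * -(⅟U * S * ⅟T))) = fromBlocks 1 0 0 1 by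
        congr 1 <;> simp [Matrix.mul_assoc, Matrix.mul_invOf_cancel_left]]
    exact fromBlocks_one
  refine ⟨V'.submatrix (eo r).symm (eo r).symm, ?_, ?_, ?_⟩
  · have hBsub : B = Be.submatrix (eo r).symm (eo r).symm := by
      rw [hBedef, Matrix.submatrix_submatrix]
      ext x y
      simp [Matrix.submatrix_apply]
    rw [hBsub, Matrix.submatrix_mul_equiv, hV'Be, Matrix.submatrix_one_equiv]
  · have hBsub : B = Be.submatrix (eo r).symm (eo r).symm := by
      rw [hBedef, Matrix.submatrix_submatrix]
      ext x y
      simp [Matrix.submatrix_apply]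
    rw [hBsub, Matrix.submatrix_mul_equiv, hBeV', Matrix.submatrix_one_equiv]
  · intro x y hx hy
    rw [Matrix.submatrix_apply, eo_symm_even r x hx, eo_symm_even r y hy, hV']
    rfl

/-- rank of `[[X,0],[0,0]]` equals rank of `X`. -/
lemma rank_fromBlocks_zero {m o : Type*} [Fintype m] [Fintype o] [DecidableEq m] [DecidableEq o]
    (X : Matrix m m ℝ) :
    (fromBlocks X 0 0 (0 : Matrix o o ℝ)).rank = X.rank := by
  apply le_antisymm
  · have h : fromRows (1 : Matrix m m ℝ) (0 : Matrix o m ℝ) *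
        (X * fromCols (1 : Matrix m m ℝ) (0 : Matrix m o ℝ)) =
        fromBlocks X 0 0 (0 : Matrix o o ℝ) := by
      rw [← Matrix.mul_assoc, Matrix.fromRows_mul, Matrix.one_mul, Matrix.zero_mul,
        Matrix.fromRows_mul_fromCols]
      simp
    rw [← h]
    exact (Matrix.rank_mul_le_right _ _).trans (Matrix.rank_mul_le_left _ _)
  · have h : fromCols (1 : Matrix m m ℝ) (0 : Matrix m o ℝ) *
        (fromBlocks X 0 0 (0 : Matrix o o ℝ) * fromRows (1 : Matrix m m ℝ) (0 : Matrix o m ℝ)) =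
        X := by
      rw [← Matrix.mul_assoc, Matrix.fromCols_mul_fromBlocks,
        Matrix.fromCols_mul_fromRows]
      simp
    nth_rewrite 1 [← h]
    exact (Matrix.rank_mul_le_right _ _).trans (Matrix.rank_mul_le_left _ _)

/-- if each `A i j` (for `i < j`) has zero second row and every even-indexed
(1-based) row of `C` is zero, then the antisymmetric `n × n` matrix
`[[J̄₂ᵣ + R(A), C], [-Cᵀ, 0]]` has rank exactly `2r`. -/
theorem stmt_3 (n r : ℕ) (hr : 1 ≤ r) (hn : 2 * r ≤ n)
    (A : Fin r → Fin r → Matrix (Fin 2) (Fin 2) ℝ)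
    (hA : ∀ i j : Fin r, i < j → ∀ y : Fin 2, A i j 1 y = 0)
    (C : Matrix (Fin (2 * r)) (Fin (n - 2 * r)) ℝ)
    (hC : ∀ (i : Fin r) (j : Fin (n - 2 * r)), C ⟨2 * (i : ℕ) + 1, by have := i.2; omega⟩ j = 0) :
    ((Matrix.fromBlocks (Jbar r + Rblock A) C (-Cᵀ) 0).reindex
        (finSumFinEquiv.trans (finCongr (Nat.add_sub_cancel' hn)))
        (finSumFinEquiv.trans (finCongr (Nat.add_sub_cancel' hn)))).rank = 2 * r := by
  classical
  rw [Matrix.rank_reindex]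
  obtain ⟨V, hVB, hBV, hVeven⟩ := B_has_good_inverse A hA
  letI iB : Invertible (Jbar r + Rblock A) := ⟨V, hVB, hBV⟩
  have hinv : ⅟(Jbar r + Rblock A) = V := rfl
  -- the Schur complement vanishes
  have hCV : (-Cᵀ) * V * C = 0 := by
    ext j k
    rw [Matrix.mul_apply, Matrix.zero_apply]
    apply Finset.sum_eq_zero
    intro y _
    by_cases hy : (y : ℕ) % 2 = 0
    · have hz : ((-Cᵀ) * V) j y = 0 := by
        rw [Matrix.mul_apply]
        apply Finset.sum_eq_zero
        intro x _
        by_cases hx : (x : ℕ) % 2 = 0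
        · rw [hVeven x y hx hy, mul_zero]
        · have hxx : x = ⟨2 * ((⟨(x : ℕ) / 2, by have := x.2; omega⟩ : Fin r) : ℕ) + 1,
              by have := x.2; omega⟩ := Fin.ext (by show (x : ℕ) = 2 * ((x : ℕ) / 2) + 1; omega)
          rw [Matrix.neg_apply, Matrix.transpose_apply, hxx, hC]
          simp
      rw [hz, zero_mul]
    · have hyy : y = ⟨2 * ((⟨(y : ℕ) / 2, by have := y.2; omega⟩ : Fin r) : ℕ) + 1,
          by have := y.2; omega⟩ := Fin.ext (by show (y : ℕ) = 2 * ((y : ℕ) / 2) + 1; omega)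
      rw [hyy, hC, mul_zero]
  rw [Matrix.fromBlocks_eq_of_invertible₁₁ (Jbar r + Rblock A) C (-Cᵀ) 0]
  have hmid : (0 : Matrix (Fin (n - 2 * r)) (Fin (n - 2 * r)) ℝ) -
      (-Cᵀ) * ⅟(Jbar r + Rblock A) * C = 0 := by
    rw [hinv, hCV, sub_zero]
  rw [hmid]
  rw [Matrix.rank_mul_eq_left_of_isUnit_det _ _
    (by rw [Matrix.det_fromBlocks_zero₂₁, Matrix.det_one, Matrix.det_one, mul_one]
        exact isUnit_one)]
  rw [Matrix.rank_mul_eq_right_of_isUnit_det _ _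
    (by rw [Matrix.det_fromBlocks_zero₁₂, Matrix.det_one, Matrix.det_one, mul_one]
        exact isUnit_one)]
  rw [rank_fromBlocks_zero]
  rw [Matrix.rank_of_isUnit _ (isUnit_of_invertible _)]
  simp
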